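/- Existence of a canonical shifting solution (matrix case): for every matrix A : Fin m → Fin n → ℝ and every finite set Ω ⊆ Fin m × Fin n of known entries, there exists a canonical shifting solution (r, c) for (A, Ω). (For instance, any minimizer of the convex quadratic (r, c) ↦ ∑_{(i,j) ∈ Ω} (A(i,j) − r i − c j)² satisfies the defining zero-sum conditions.) -/

import Mathlib

open Finset

/-- `(r, c)` is a canonical shifting solution for the matrix `A` with known entries `Ω`:
writing `A'(i,j) = A(i,j) - r i - c j`, the sum of `A'` over each nonempty known row slice
and each nonempty known column slice is zero. -/
def IsCSSM {m n : ℕ} (A : Fin m → Fin n → ℝ) (Ω : Finset (Fin m × Fin n))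
    (r : Fin m → ℝ) (c : Fin n → ℝ) : Prop :=
  (∀ i : Fin m, (Ω.filter (fun p => p.1 = i)).Nonempty →
    ∑ p ∈ Ω.filter (fun p => p.1 = i), (A p.1 p.2 - r p.1 - c p.2) = 0) ∧
  (∀ j : Fin n, (Ω.filter (fun p => p.2 = j)).Nonempty →
    ∑ p ∈ Ω.filter (fun p => p.2 = j), (A p.1 p.2 - r p.1 - c p.2) = 0)

/-- An unknown entry `(i, j)` is fully supported w.r.t. `Ω` if it is a corner of a
rectangle whose other three corners are known. -/
def FullySupportedM {m n : ℕ} (Ω : Finset (Fin m × Fin n)) (i : Fin m) (j : Fin n) : Prop :=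
  ∃ (i' : Fin m) (j' : Fin n), i' ≠ i ∧ j' ≠ j ∧
    (i', j) ∈ Ω ∧ (i, j') ∈ Ω ∧ (i', j') ∈ Ω

/-- Existence of a canonical shifting solution (matrix case). -/
theorem cssm_exists {m n : ℕ} (hm : 0 < m) (hn : 0 < n)
    (A : Fin m → Fin n → ℝ) (Ω : Finset (Fin m × Fin n)) :
    ∃ (r : Fin m → ℝ) (c : Fin n → ℝ), IsCSSM A Ω r c := by
  classical
  let L : ((Fin m → ℝ) × (Fin n → ℝ)) →ₗ[ℝ] EuclideanSpace ℝ (Fin m × Fin n) :=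
    { toFun := fun rc => WithLp.toLp 2 fun p => if p ∈ Ω then rc.1 p.1 + rc.2 p.2 else 0
      map_add' := by
        intro x y; ext p
        show (if p ∈ Ω then _ else _ : ℝ) = (if p ∈ Ω then _ else _ : ℝ) + (if p ∈ Ω then _ else _ : ℝ)
        split <;> simp [Prod.fst_add, Prod.snd_add] <;> ring
      map_smul' := by
        intro t x; ext p
        show (if p ∈ Ω then _ else _) = t * (if p ∈ Ω then _ else _)
        split <;> simp <;> ring }
  let a : EuclideanSpace ℝ (Fin m × Fin n) := WithLp.toLp 2 fun p => if p ∈ Ω then A p.1 p.2 else 0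
  obtain ⟨y, hyK, z, hz, hsum⟩ := (LinearMap.range L).exists_add_mem_mem_orthogonal a
  obtain ⟨⟨r, c⟩, rfl⟩ := hyK
  have hzval : ∀ p ∈ Ω, z p = A p.1 p.2 - r p.1 - c p.2 := by
    intro p hp
    have h := congrArg (fun v => v p) hsum
    have h1 : a p = A p.1 p.2 := if_pos hp
    have h2 : L (r, c) p = r p.1 + c p.2 := if_pos hp
    have h3 : (L (r, c) + z) p = L (r, c) p + z p := rfl
    rw [h3, h1, h2] at h
    linarith
  have key : ∀ rc : (Fin m → ℝ) × (Fin n → ℝ),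
      ∑ p : Fin m × Fin n, (if p ∈ Ω then rc.1 p.1 + rc.2 p.2 else 0) * z p = 0 := by
    intro rc
    have h := (Submodule.mem_orthogonal _ z).mp hz (L rc) (LinearMap.mem_range_self L rc)
    simpa [PiLp.inner_apply, RCLike.inner_apply, L, mul_comm] using h
  refine ⟨r, c, ?_, ?_⟩
  · intro i _
    have h := key (fun i' => if i' = i then 1 else 0, 0)
    have h2 : ∑ p ∈ Ω.filter (fun p => p.1 = i), z p = 0 := by
      rw [← h]
      rw [show Ω.filter (fun p => p.1 = i)
          = Finset.univ.filter (fun p : Fin m × Fin n => p ∈ Ω ∧ p.1 = i) by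
        ext p; simp [Finset.mem_filter]]
      rw [Finset.sum_filter]
      refine Finset.sum_congr rfl fun p _ => ?_
      by_cases hp : p ∈ Ω <;> by_cases hpi : p.1 = i <;> simp [hp, hpi]
    rw [← h2]
    exact Finset.sum_congr rfl fun p hp => (hzval p (Finset.mem_filter.mp hp).1).symm
  · intro j _
    have h := key (0, fun j' => if j' = j then 1 else 0)
    have h2 : ∑ p ∈ Ω.filter (fun p => p.2 = j), z p = 0 := by
      rw [← h]
      rw [show Ω.filter (fun p => p.2 = j)
          = Finset.univ.filter (fun p : Fin m × Fin n => p ∈ Ω ∧ p.2 = j) by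
        ext p; simp [Finset.mem_filter]]
      rw [Finset.sum_filter]
      refine Finset.sum_congr rfl fun p _ => ?_
      by_cases hp : p ∈ Ω <;> by_cases hpj : p.2 = j <;> simp [hp, hpj]
    rw [← h2]
    exact Finset.sum_congr rfl fun p hp => (hzval p (Finset.mem_filter.mp hp).1).symm
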